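/- Let $(\Omega, \mathcal{F}, \mathbb{P})$ be a probability space, $a: \Omega \to \mathbb{R}^{d\times d}$ with positive semidefinite symmetric part, $\mu(\omega) := \sup_{\xi: a\xi\neq 0} |a\xi|^2/(\xi\cdot a\xi)$ satisfying $\mathbb{E}[\mu] \le K$, and $V: \Omega \to \mathbb{R}^d$ a random vector with $\mathbb{E}[V\cdot aV] < \infty$. Then $|\mathbb{E}[aV]| \le \mathbb{E}[\mu]^{1/2}\, \mathbb{E}[V \cdot a V]^{1/2}$. -/

import Mathlib

open MeasureTheory Matrix

/-- If the symmetric part of `a` is positive semidefinite, `mu` bounds the ratios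
`|aξ|²/(ξ·aξ)` (i.e. `|aξ|² ≤ mu (ξ·aξ)` for all `ξ`), `E[mu] ≤ K`, and the energy
`E[V·aV]` is finite, then `|E[aV]| ≤ E[mu]^{1/2} E[V·aV]^{1/2}`. -/
theorem stmt_4 {Ω : Type*} [MeasurableSpace Ω] (P : Measure Ω) [IsProbabilityMeasure P]
    (d : ℕ) (a : Ω → Matrix (Fin d) (Fin d) ℝ) (mu : Ω → ℝ) (K : ℝ) (hK : 0 < K)
    (V : Ω → Fin d → ℝ)
    (hpsd : ∀ ω (ξ : Fin d → ℝ), 0 ≤ ξ ⬝ᵥ (a ω).mulVec ξ)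
    (hmu0 : ∀ ω, 0 ≤ mu ω)
    (hmu : ∀ ω (ξ : Fin d → ℝ),
      (a ω).mulVec ξ ⬝ᵥ (a ω).mulVec ξ ≤ mu ω * (ξ ⬝ᵥ (a ω).mulVec ξ))
    (hmuInt : Integrable mu P) (hKbd : ∫ ω, mu ω ∂P ≤ K)
    (hmeas : AEStronglyMeasurable (fun ω => (a ω).mulVec (V ω)) P)
    (hEnergy : Integrable (fun ω => V ω ⬝ᵥ (a ω).mulVec (V ω)) P) :
    Real.sqrt ((∫ ω, (a ω).mulVec (V ω) ∂P) ⬝ᵥ (∫ ω, (a ω).mulVec (V ω) ∂P)) ≤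
      (∫ ω, mu ω ∂P) ^ ((1 : ℝ)/2) * (∫ ω, V ω ⬝ᵥ (a ω).mulVec (V ω) ∂P) ^ ((1 : ℝ)/2) := by
  set F : Ω → Fin d → ℝ := fun ω => (a ω).mulVec (V ω) with hFdef
  set e : Ω → ℝ := fun ω => V ω ⬝ᵥ (a ω).mulVec (V ω) with hedef
  have he0 : ∀ ω, 0 ≤ e ω := fun ω => hpsd ω (V ω)
  have hemeas : AEStronglyMeasurable e P := hEnergy.aestronglyMeasurable
  have hsmu_meas : AEStronglyMeasurable (fun ω => Real.sqrt (mu ω)) P :=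
    Real.continuous_sqrt.comp_aestronglyMeasurable hmuInt.aestronglyMeasurable
  have hse_meas : AEStronglyMeasurable (fun ω => Real.sqrt (e ω)) P :=
    Real.continuous_sqrt.comp_aestronglyMeasurable hemeas
  have hsmu2 : MemLp (fun ω => Real.sqrt (mu ω)) 2 P := by
    rw [memLp_two_iff_integrable_sq hsmu_meas]
    exact hmuInt.congr (Filter.Eventually.of_forall fun ω => (Real.sq_sqrt (hmu0 ω)).symm)
  have hse2 : MemLp (fun ω => Real.sqrt (e ω)) 2 P := by
    rw [memLp_two_iff_integrable_sq hse_meas]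
    exact hEnergy.congr (Filter.Eventually.of_forall fun ω => (Real.sq_sqrt (he0 ω)).symm)
  have hprodInt : Integrable (fun ω => Real.sqrt (mu ω) * Real.sqrt (e ω)) P := by
    have hexp : (1 : ENNReal)/1 = 1/2 + 1/2 := by
      rw [ENNReal.div_add_div_same, one_add_one_eq_two, ENNReal.div_self two_ne_zero ENNReal.ofNat_ne_top, one_div_one]
    have h := hse2.smul (𝕜 := ℝ) hsmu2 (r := 1) (hpqr := ⟨by simpa only [one_div] using hexp.symm⟩)
    rw [memLp_one_iff_integrable] at h
    exact h
  have hpt : ∀ ω, Real.sqrt (F ω ⬝ᵥ F ω) ≤ Real.sqrt (mu ω) * Real.sqrt (e ω) := by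
    intro ω
    calc Real.sqrt (F ω ⬝ᵥ F ω) ≤ Real.sqrt (mu ω * e ω) :=
          Real.sqrt_le_sqrt (hmu ω (V ω))
      _ = Real.sqrt (mu ω) * Real.sqrt (e ω) := Real.sqrt_mul (hmu0 ω) _
  have hFF_meas : AEStronglyMeasurable (fun ω => F ω ⬝ᵥ F ω) P := by
    simp only [dotProduct]
    exact Finset.aestronglyMeasurable_fun_sum _ fun i _ =>
      (((continuous_apply i).comp_aestronglyMeasurable hmeas).mul
        ((continuous_apply i).comp_aestronglyMeasurable hmeas))
  have hg_meas : AEStronglyMeasurable (fun ω => Real.sqrt (F ω ⬝ᵥ F ω)) P :=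
    Real.continuous_sqrt.comp_aestronglyMeasurable hFF_meas
  have hgInt : Integrable (fun ω => Real.sqrt (F ω ⬝ᵥ F ω)) P := by
    refine hprodInt.mono' hg_meas (Filter.Eventually.of_forall fun ω => ?_)
    rw [Real.norm_of_nonneg (Real.sqrt_nonneg _)]
    exact hpt ω
  have hFle : ∀ ω, ‖F ω‖ ≤ Real.sqrt (F ω ⬝ᵥ F ω) := by
    intro ω
    rw [pi_norm_le_iff_of_nonneg (Real.sqrt_nonneg _)]
    intro i
    rw [Real.norm_eq_abs, ← Real.sqrt_sq_eq_abs]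
    apply Real.sqrt_le_sqrt
    have hh : F ω ⬝ᵥ F ω = ∑ j, F ω j ^ 2 := by
      simp [dotProduct, sq]
    rw [hh]
    exact Finset.single_le_sum (f := fun j => F ω j ^ 2) (fun j _ => sq_nonneg _)
      (Finset.mem_univ i)
  have hFInt : Integrable F P :=
    hgInt.mono' hmeas (Filter.Eventually.of_forall fun ω => hFle ω)
  set w : Fin d → ℝ := ∫ ω, F ω ∂P with hwdef
  have hwi : ∀ i, w i = ∫ ω, F ω i ∂P := by
    intro i
    rw [hwdef]
    exact ((ContinuousLinearMap.proj (R := ℝ) (φ := fun _ : Fin d => ℝ) i).integral_comp_comm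
      hFInt).symm
  have hFiInt : ∀ i, Integrable (fun ω => F ω i) P := fun i =>
    (ContinuousLinearMap.proj (R := ℝ) (φ := fun _ : Fin d => ℝ) i).integrable_comp hFInt
  have hdot : w ⬝ᵥ w = ∫ ω, w ⬝ᵥ F ω ∂P := by
    simp only [dotProduct]
    rw [integral_finset_sum _ (fun i _ => (hFiInt i).const_mul (w i))]
    refine Finset.sum_congr rfl fun i _ => ?_
    rw [integral_const_mul, ← hwi i]
  have hcs : ∀ ω, w ⬝ᵥ F ω ≤ Real.sqrt (w ⬝ᵥ w) * Real.sqrt (F ω ⬝ᵥ F ω) := by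
    intro ω
    have hineq := Real.sum_mul_le_sqrt_mul_sqrt Finset.univ w (F ω)
    simpa [dotProduct, sq] using hineq
  set S : ℝ := Real.sqrt (w ⬝ᵥ w) with hSdef
  set C : ℝ := (∫ ω, mu ω ∂P) ^ ((1 : ℝ)/2) * (∫ ω, e ω ∂P) ^ ((1 : ℝ)/2) with hCdef
  have hC0 : 0 ≤ C :=
    mul_nonneg (Real.rpow_nonneg (integral_nonneg hmu0) _)
      (Real.rpow_nonneg (integral_nonneg he0) _)
  have hholder : ∫ ω, Real.sqrt (mu ω) * Real.sqrt (e ω) ∂P ≤ C := by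
    have hpq : (2 : ℝ).HolderConjugate 2 := by
      constructor <;> norm_num
    have h2 : ENNReal.ofReal (2:ℝ) = 2 := by norm_num
    have hH := integral_mul_le_Lp_mul_Lq_of_nonneg (μ := P) hpq
      (Filter.Eventually.of_forall fun ω => Real.sqrt_nonneg (mu ω))
      (Filter.Eventually.of_forall fun ω => Real.sqrt_nonneg (e ω))
      (h2 ▸ hsmu2) (h2 ▸ hse2)
    have hsq : ∀ x : ℝ, 0 ≤ x → Real.sqrt x ^ (2:ℝ) = x := fun x hx => by
      rw [show (2:ℝ) = ((2:ℕ):ℝ) by norm_num, Real.rpow_natCast, Real.sq_sqrt hx]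
    have e1 : ∫ ω, Real.sqrt (mu ω) ^ (2:ℝ) ∂P = ∫ ω, mu ω ∂P :=
      integral_congr_ae (Filter.Eventually.of_forall fun ω => hsq _ (hmu0 ω))
    have e2 : ∫ ω, Real.sqrt (e ω) ^ (2:ℝ) ∂P = ∫ ω, e ω ∂P :=
      integral_congr_ae (Filter.Eventually.of_forall fun ω => hsq _ (he0 ω))
    rw [e1, e2] at hH
    exact hH
  have hchain : w ⬝ᵥ w ≤ S * C := by
    calc w ⬝ᵥ w = ∫ ω, w ⬝ᵥ F ω ∂P := hdot
      _ ≤ ∫ ω, S * Real.sqrt (F ω ⬝ᵥ F ω) ∂P := by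
          refine integral_mono ?_ (hgInt.const_mul S) fun ω => hcs ω
          simp only [dotProduct]
          exact integrable_finset_sum _ fun i _ => (hFiInt i).const_mul (w i)
      _ = S * ∫ ω, Real.sqrt (F ω ⬝ᵥ F ω) ∂P := integral_const_mul _ _
      _ ≤ S * ∫ ω, Real.sqrt (mu ω) * Real.sqrt (e ω) ∂P :=
          mul_le_mul_of_nonneg_left (integral_mono hgInt hprodInt fun ω => hpt ω)
            (Real.sqrt_nonneg _)
      _ ≤ S * C := mul_le_mul_of_nonneg_left hholder (Real.sqrt_nonneg _)
  show S ≤ C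
  rcases eq_or_lt_of_le (Real.sqrt_nonneg (w ⬝ᵥ w)) with h0 | h0
  · rw [hSdef, ← h0]
    exact hC0
  · have hww0 : 0 ≤ w ⬝ᵥ w :=
      Finset.sum_nonneg fun i _ => mul_self_nonneg (w i)
    have hS2 : S * S = w ⬝ᵥ w := Real.mul_self_sqrt hww0
    have hfin : S * S ≤ S * C := hS2 ▸ hchain
    exact le_of_mul_le_mul_left hfin h0
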